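/- Let G ∈ F_q^{k×n} be a matrix in which every k columns are linearly independent (a generator matrix of an MDS code of dimension k). Then G satisfies the t-all-symbol batch property with t = ⌊(n−1)/k⌋ + 1, and does not satisfy the t'-all-symbol PIR property for any t' > ⌊(n−1)/k⌋ + 1. -/

import Mathlib

open Matrix

/-- `G` serves the list of vectors `v` (indexed by `ι`) if there are pairwise disjoint
recovery sets `R i` of column indices with `v i` in the span of the columns indexed by `R i`. -/
def Serves (F : Type*) [Field F] {m n ι : Type*} (G : Matrix m n F) (v : ι → (m → F)) : Prop :=
  ∃ R : ι → Set n, (Pairwise fun a b => Disjoint (R a) (R b)) ∧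
    ∀ i, v i ∈ Submodule.span F ((fun j a => G a j) '' R i)

/-- the `t`-all-symbol PIR property. -/
def ASPIR (F : Type*) [Field F] {m n : Type*} (t : ℕ) (G : Matrix m n F) : Prop :=
  ∀ j : n, Serves F G fun _ : Fin t => fun a => G a j

/-- the `t`-all-symbol batch property. -/
def ASBatch (F : Type*) [Field F] {m n : Type*} (t : ℕ) (G : Matrix m n F) : Prop :=
  ∀ c : Fin t → n, Serves F G fun i => fun a => G a (c i)

/-! ### Auxiliary embedding skipping a given index -/

def embedAux (n : ℕ) (hn : 0 < n) (c0 : Fin n) (j : ℕ) : Fin n :=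
  if h : j < (c0 : ℕ) then ⟨j, h.trans c0.isLt⟩ else ⟨(j + 1) % n, Nat.mod_lt _ hn⟩

lemma embedAux_val {n : ℕ} (hn : 0 < n) (c0 : Fin n) {j : ℕ} (hj : j < n - 1) :
    (embedAux n hn c0 j : ℕ) = if j < (c0 : ℕ) then j else j + 1 := by
  unfold embedAux
  split_ifs with h
  · rfl
  · exact Nat.mod_eq_of_lt (by omega)

lemma embedAux_ne {n : ℕ} (hn : 0 < n) (c0 : Fin n) {j : ℕ} (hj : j < n - 1) :
    embedAux n hn c0 j ≠ c0 := by
  have h := embedAux_val hn c0 hj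
  intro hEq
  rw [hEq] at h
  split_ifs at h <;> omega

lemma embedAux_inj {n : ℕ} (hn : 0 < n) (c0 : Fin n) {j j' : ℕ} (hj : j < n - 1)
    (hj' : j' < n - 1) (h : embedAux n hn c0 j = embedAux n hn c0 j') : j = j' := by
  have h1 := embedAux_val hn c0 hj
  have h2 := embedAux_val hn c0 hj'
  have h3 : (embedAux n hn c0 j : ℕ) = (embedAux n hn c0 j' : ℕ) := congrArg Fin.val h
  split_ifs at h1 h2 <;> omega

/-! ### Span lemmas from the MDS property -/

lemma aux_span_top {F : Type*} [Field F] {k n : ℕ} (hk : 1 ≤ k)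
    (G : Matrix (Fin k) (Fin n) F)
    (hMDS : ∀ s : Finset (Fin n), s.card = k →
      LinearIndependent F fun j : s => fun i => G i (j : Fin n))
    (s : Finset (Fin n)) (hs : s.card = k) :
    Submodule.span F ((fun j a => G a j) '' (s : Set (Fin n))) = ⊤ := by
  have hne : Nonempty ↥s := by
    rw [Finset.nonempty_coe_sort]
    exact Finset.card_pos.mp (by omega)
  have hli := hMDS s hs
  have hcard : Fintype.card ↥s = Module.finrank F (Fin k → F) := by
    simp [Fintype.card_coe, hs, Module.finrank_pi]
  have h := hli.span_eq_top_of_card_eq_finrank hcard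
  rw [Set.image_eq_range]
  exact h

lemma aux_big {F : Type*} [Field F] {k n : ℕ} (hk : 1 ≤ k) (hkn : k ≤ n)
    (G : Matrix (Fin k) (Fin n) F)
    (hMDS : ∀ s : Finset (Fin n), s.card = k →
      LinearIndependent F fun j : s => fun i => G i (j : Fin n))
    (s : Finset (Fin n)) (j : Fin n) (hj : j ∉ s)
    (hmem : (fun a => G a j) ∈ Submodule.span F ((fun j a => G a j) '' (s : Set (Fin n)))) :
    k ≤ s.card := by
  by_contra hlt
  push_neg at hlt
  have hins : (insert j s).card ≤ k := by
    have := Finset.card_insert_le j s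
    omega
  obtain ⟨s', hsub', hcard'⟩ := Finset.exists_superset_card_eq hins (by simpa using hkn)
  have hli := hMDS s' hcard'
  have hjs' : j ∈ s' := hsub' (Finset.mem_insert_self j s)
  have hnot := hli.notMem_span_image
    (s := {x : ↥s' | (x : Fin n) ∈ s}) (x := ⟨j, hjs'⟩) (by simpa using hj)
  apply hnot
  refine Submodule.span_le.mpr ?_ hmem
  rintro y ⟨x, hx, rfl⟩
  exact Submodule.subset_span
    ⟨⟨x, hsub' (Finset.mem_insert_of_mem hx)⟩, hx, rfl⟩

theorem stmt12 {F : Type*} [Field F] {k n : ℕ} (hk : 1 ≤ k) (hkn : k ≤ n)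
    (G : Matrix (Fin k) (Fin n) F)
    (hMDS : ∀ s : Finset (Fin n), s.card = k →
      LinearIndependent F fun j : s => fun i => G i (j : Fin n)) :
    ASBatch F ((n - 1) / k + 1) G ∧
    ∀ t' : ℕ, (n - 1) / k + 1 < t' → ¬ ASPIR F t' G := by
  classical
  have npos : 0 < n := hk.trans hkn
  constructor
  · -- Batch property
    intro c
    set c0 : Fin n := c 0 with hc0
    set embed : ℕ → Fin n := embedAux n npos c0 with hembed
    set R : Fin ((n - 1) / k + 1) → Set (Fin n) := fun i =>
      if i = 0 then {c0}
      else embed '' Set.Ico ((i.val - 1) * k) ((i.val - 1) * k + k) with hR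
    have blk_le : ∀ i : Fin ((n - 1) / k + 1), i ≠ 0 →
        (i.val - 1) * k + k ≤ n - 1 := by
      intro i hi
      have h1 : 1 ≤ i.val :=
        Nat.one_le_iff_ne_zero.mpr (fun h => hi (Fin.ext (by simp [h])))
      have h2 : i.val ≤ (n - 1) / k := by have := i.isLt; omega
      have h3 : (i.val - 1) * k + k = i.val * k := by
        obtain ⟨m, hm⟩ : ∃ m, i.val = m + 1 := ⟨i.val - 1, by omega⟩
        rw [hm]; simp [Nat.add_mul]
      rw [h3]
      calc i.val * k ≤ (n - 1) / k * k := Nat.mul_le_mul_right k h2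
        _ ≤ n - 1 := Nat.div_mul_le_self _ _
    refine ⟨R, ?_, ?_⟩
    · intro a b hab
      have key : ∀ x y : Fin ((n - 1) / k + 1), x ≠ y → x ≠ 0 → y ≠ 0 →
          Disjoint (R x) (R y) := by
        intro x y hxy hx hy
        have hRx : R x = embed '' Set.Ico ((x.val - 1) * k) ((x.val - 1) * k + k) :=
          if_neg hx
        have hRy : R y = embed '' Set.Ico ((y.val - 1) * k) ((y.val - 1) * k + k) :=
          if_neg hy
        rw [hRx, hRy, Set.disjoint_left]
        rintro z ⟨j, hj, rfl⟩ ⟨j', hj', hjj'⟩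
        have hjb : j < n - 1 := by have := blk_le x hx; simp [Set.mem_Ico] at hj; omega
        have hjb' : j' < n - 1 := by have := blk_le y hy; simp [Set.mem_Ico] at hj'; omega
        have hjj : j = j' := embedAux_inj npos c0 hjb hjb' hjj'.symm
        rw [← hjj] at hj'
        simp [Set.mem_Ico] at hj hj'
        have hx1 : 1 ≤ x.val :=
          Nat.one_le_iff_ne_zero.mpr (fun h => hx (Fin.ext (by simp [h])))
        have hy1 : 1 ≤ y.val :=
          Nat.one_le_iff_ne_zero.mpr (fun h => hy (Fin.ext (by simp [h])))
        have hdx : j / k = x.val - 1 :=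
          Nat.div_eq_of_lt_le hj.1 (by rw [Nat.succ_mul]; exact hj.2)
        have hdy : j / k = y.val - 1 :=
          Nat.div_eq_of_lt_le hj'.1 (by rw [Nat.succ_mul]; exact hj'.2)
        exact hxy (Fin.ext (by omega))
      rcases eq_or_ne a 0 with rfl | ha
      · -- a = 0
        have hb : b ≠ 0 := fun h => hab h.symm
        have hR0 : R 0 = {c0} := if_pos rfl
        have hRb : R b = embed '' Set.Ico ((b.val - 1) * k) ((b.val - 1) * k + k) :=
          if_neg hb
        rw [hR0, hRb, Set.disjoint_left]
        rintro z hz ⟨j, hj, rfl⟩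
        have hjb : j < n - 1 := by have := blk_le b hb; simp [Set.mem_Ico] at hj; omega
        rw [Set.mem_singleton_iff] at hz
        exact embedAux_ne npos c0 hjb hz
      · rcases eq_or_ne b 0 with rfl | hb
        · have hR0 : R 0 = {c0} := if_pos rfl
          have hRa : R a = embed '' Set.Ico ((a.val - 1) * k) ((a.val - 1) * k + k) :=
            if_neg ha
          rw [hR0, hRa, Set.disjoint_right]
          rintro z hz ⟨j, hj, rfl⟩
          have hjb : j < n - 1 := by have := blk_le a ha; simp [Set.mem_Ico] at hj; omega
          rw [Set.mem_singleton_iff] at hz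
          exact embedAux_ne npos c0 hjb hz
        · exact key a b hab ha hb
    · intro i
      rcases eq_or_ne i 0 with rfl | hi
      · have hR0 : R 0 = {c0} := if_pos rfl
        rw [hR0]
        exact Submodule.subset_span ⟨c 0, rfl, rfl⟩
      · have hRi : R i = embed '' Set.Ico ((i.val - 1) * k) ((i.val - 1) * k + k) :=
          if_neg hi
        rw [hRi]
        set lo := (i.val - 1) * k with hlo
        have hblk := blk_le i hi
        have hset : (↑((Finset.Ico lo (lo + k)).image embed) : Set (Fin n))
            = embed '' Set.Ico lo (lo + k) := by
          rw [Finset.coe_image, Finset.coe_Ico]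
        have hcard : ((Finset.Ico lo (lo + k)).image embed).card = k := by
          rw [Finset.card_image_of_injOn, Nat.card_Ico, Nat.add_sub_cancel_left]
          intro x hx y hy hxy
          simp [Finset.mem_Ico] at hx hy
          exact embedAux_inj npos c0 (by omega) (by omega) hxy
        rw [← hset, aux_span_top hk G hMDS _ hcard]
        trivial
  · -- PIR impossibility
    intro t' ht' hPIR
    obtain ⟨R, hdisj, hmem⟩ := hPIR (⟨0, npos⟩ : Fin n)
    set j0 : Fin n := ⟨0, npos⟩ with hj0
    set S : Fin t' → Finset (Fin n) := fun i => (Set.toFinite (R i)).toFinset with hSdef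
    have hScoe : ∀ i, (↑(S i) : Set (Fin n)) = R i := fun i => Set.Finite.coe_toFinset _
    have hcases : ∀ i, j0 ∈ R i ∨ k ≤ (S i).card := by
      intro i
      by_cases hj : j0 ∈ R i
      · exact Or.inl hj
      · refine Or.inr (aux_big hk hkn G hMDS (S i) j0 ?_ ?_)
        · rw [← Finset.mem_coe, hScoe]; exact hj
        · rw [hScoe]; exact hmem i
    have hdisjS : ∀ a ∈ Finset.univ, ∀ b ∈ (Finset.univ : Finset (Fin t')),
        a ≠ b → Disjoint (S a) (S b) := by
      intro a _ b _ hab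
      exact Set.Finite.disjoint_toFinset.mpr (hdisj hab)
    have hsum : ∑ i, (S i).card ≤ n := by
      rw [← Finset.card_biUnion hdisjS]
      calc (Finset.univ.biUnion S).card ≤ Fintype.card (Fin n) := Finset.card_le_univ _
        _ = n := Fintype.card_fin n
    have hlow : (t' - 1) * k + 1 ≤ ∑ i, (S i).card := by
      have hmul : (t' - 1) * k + k = t' * k := by
        have ht'pos : 0 < t' := lt_of_le_of_lt (Nat.zero_le _) ht'
        obtain ⟨m, hm⟩ : ∃ m, t' = m + 1 :=
          ⟨t' - 1, (Nat.succ_pred_eq_of_pos ht'pos).symm⟩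
        subst hm
        rw [Nat.add_sub_cancel, Nat.succ_mul]
      rcases Classical.em (∃ i0, j0 ∈ R i0) with ⟨i0, hj0i0⟩ | hno
      · have h1 : 1 ≤ (S i0).card :=
          Finset.card_pos.mpr ⟨j0, (Set.Finite.mem_toFinset _).mpr hj0i0⟩
        have hk' : ∀ i ∈ Finset.univ.erase i0, k ≤ (S i).card := by
          intro i hi
          rcases hcases i with h | h
          · exact absurd h (Set.disjoint_left.mp
              (hdisj (Finset.ne_of_mem_erase hi)) · hj0i0)
          · exact h
        have hce : (Finset.univ.erase i0).card = t' - 1 := by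
          rw [Finset.card_erase_of_mem (Finset.mem_univ i0), Finset.card_univ,
            Fintype.card_fin]
        calc (t' - 1) * k + 1 ≤ (∑ _i ∈ Finset.univ.erase i0, k) + (S i0).card := by
              rw [Finset.sum_const, hce, smul_eq_mul]; exact Nat.add_le_add_left h1 _
          _ ≤ (∑ i ∈ Finset.univ.erase i0, (S i).card) + (S i0).card :=
              Nat.add_le_add_right (Finset.sum_le_sum hk') _
          _ = ∑ i, (S i).card := Finset.sum_erase_add _ _ (Finset.mem_univ i0)
      · push_neg at hno
        have hall : ∀ i ∈ (Finset.univ : Finset (Fin t')), k ≤ (S i).card := by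
          intro i _
          rcases hcases i with h | h
          · exact absurd h (hno i)
          · exact h
        calc (t' - 1) * k + 1 ≤ (t' - 1) * k + k := Nat.add_le_add_left hk _
          _ = t' * k := hmul
          _ = ∑ _i : Fin t', k := by simp [Finset.sum_const, mul_comm]
          _ ≤ ∑ i, (S i).card := Finset.sum_le_sum hall
    have hfin : (t' - 1) * k + 1 ≤ n := hlow.trans hsum
    have h2 : (t' - 1) * k ≤ n - 1 := Nat.le_pred_of_lt hfin
    have h3 : t' - 1 ≤ (n - 1) / k := (Nat.le_div_iff_mul_le hk).mpr h2
    have h4 : t' ≤ (n - 1) / k + 1 := Nat.sub_le_iff_le_add.mp h3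
    exact absurd ht' (not_lt.mpr h4)
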